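/- Let a, â ∈ ℝ^d be unit vectors and let r ≥ 1 be a real number. If ⟨a, â⟩ ≥ 1 − 1/(2r), then ‖â − a‖₂ ≤ ‖ââᵀ − aaᵀ‖₂ / √(1 − 1/(4r)). -/

import Mathlib

open Matrix

/-- Spectral norm (largest singular value): operator norm of the induced map
between Euclidean spaces. -/
noncomputable def specNorm {m n : Type*} [Fintype m] [Fintype n] [DecidableEq n]
    (M : Matrix m n ℝ) : ℝ :=
  ‖LinearMap.toContinuousLinearMap (Matrix.toEuclideanLin M)‖

/-- Euclidean norm of a vector. -/
noncomputable def euclNorm {n : Type*} [Fintype n] (x : n → ℝ) : ℝ :=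
  Real.sqrt (∑ i, x i ^ 2)

lemma euclNorm_eq {n : Type*} [Fintype n] (x : n → ℝ) :
    euclNorm x = ‖(WithLp.equiv 2 (n → ℝ)).symm x‖ := by
  rw [EuclideanSpace.norm_eq, euclNorm]
  congr 1
  apply Finset.sum_congr rfl
  intro i _
  rw [Real.norm_eq_abs, sq_abs]
  rfl

lemma euclNorm_nonneg {n : Type*} [Fintype n] (x : n → ℝ) : 0 ≤ euclNorm x :=
  Real.sqrt_nonneg _

lemma euclNorm_sq {n : Type*} [Fintype n] (x : n → ℝ) :
    euclNorm x ^ 2 = x ⬝ᵥ x := by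
  rw [euclNorm, Real.sq_sqrt (Finset.sum_nonneg fun i _ => sq_nonneg (x i))]
  simp [dotProduct, pow_two]

lemma euclNorm_smul {n : Type*} [Fintype n] (t : ℝ) (x : n → ℝ) :
    euclNorm (t • x) = |t| * euclNorm x := by
  rw [euclNorm, euclNorm]
  have : ∑ i, (t • x) i ^ 2 = t ^ 2 * ∑ i, x i ^ 2 := by
    rw [Finset.mul_sum]
    exact Finset.sum_congr rfl fun i _ => by simp [mul_pow]
  rw [this, Real.sqrt_mul (sq_nonneg t), Real.sqrt_sq_eq_abs]

lemma vecMulVec_mulVec' {n : Type*} [Fintype n] (u v x : n → ℝ) :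
    (vecMulVec u v) *ᵥ x = (v ⬝ᵥ x) • u := by
  funext i
  simp [mulVec, vecMulVec_apply, dotProduct, Finset.mul_sum, mul_assoc,
    mul_comm, mul_left_comm]

lemma aux_e1 (r : ℝ) (hr0 : 0 < r) : 4 * (1 - 1 / (4 * r)) = 2 + 2 * (1 - 1 / (2 * r)) := by
  field_simp
  ring

set_option synthInstance.maxHeartbeats 1000000 in
set_option maxHeartbeats 1000000 in
theorem stmt_8 {d : ℕ} (a ahat : Fin d → ℝ) (r : ℝ) (hr : 1 ≤ r)
    (ha : euclNorm a = 1) (hahat : euclNorm ahat = 1)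
    (h : 1 - 1 / (2 * r) ≤ a ⬝ᵥ ahat) :
    euclNorm (fun i => ahat i - a i) ≤
      specNorm (vecMulVec ahat ahat - vecMulVec a a) / Real.sqrt (1 - 1 / (4 * r)) := by
  have hr0 : 0 < r := lt_of_lt_of_le one_pos hr
  set c : ℝ := a ⬝ᵥ ahat with hc
  have haa : a ⬝ᵥ a = 1 := by rw [← euclNorm_sq, ha]; norm_num
  have hbb : ahat ⬝ᵥ ahat = 1 := by rw [← euclNorm_sq, hahat]; norm_num
  set δ : Fin d → ℝ := fun i => ahat i - a i with hδ
  set s : Fin d → ℝ := fun i => ahat i + a i with hs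
  set M : Matrix (Fin d) (Fin d) ℝ := vecMulVec ahat ahat - vecMulVec a a with hM
  have hδ' : δ = ahat - a := rfl
  have hs' : s = ahat + a := rfl
  have hab : ahat ⬝ᵥ a = c := by rw [hc, dotProduct_comm]
  have hMδ : M *ᵥ δ = (1 - c) • s := by
    rw [hM, sub_mulVec, vecMulVec_mulVec', vecMulVec_mulVec', hδ', hs']
    rw [dotProduct_sub, dotProduct_sub, hbb, hab, haa, hc]
    module
  -- squared norms
  set nδ : ℝ := euclNorm δ with hnδ
  set ns : ℝ := euclNorm s with hns
  have hδ2 : nδ ^ 2 = 2 - 2 * c := by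
    rw [hnδ, euclNorm_sq, hδ', sub_dotProduct, dotProduct_sub, dotProduct_sub]
    simp only [hbb, haa, hab, hc.symm]
    ring
  have hs2 : ns ^ 2 = 2 + 2 * c := by
    rw [hns, euclNorm_sq, hs', add_dotProduct, dotProduct_add, dotProduct_add]
    simp only [hbb, haa, hab, hc.symm]
    ring
  -- operator norm bound
  have key : euclNorm (M *ᵥ δ) ≤ specNorm M * nδ := by
    have hop := (LinearMap.toContinuousLinearMap (Matrix.toEuclideanLin M)).le_opNorm
      ((WithLp.equiv 2 (Fin d → ℝ)).symm δ)
    rw [hnδ, euclNorm_eq (M *ᵥ δ), euclNorm_eq δ]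
    simpa [specNorm, Matrix.toEuclideanLin_apply_piLp_toLp] using hop
  have hc1 : c ≤ 1 := by nlinarith [sq_nonneg nδ, hδ2]
  have hkey2 : (1 - c) * ns ≤ specNorm M * nδ := by
    have h2 := key
    rw [hMδ, euclNorm_smul, abs_of_nonneg (by linarith : (0:ℝ) ≤ 1 - c)] at h2
    exact h2
  set q : ℝ := Real.sqrt (1 - 1 / (4 * r)) with hq
  have h4 : (0:ℝ) < 4 * r := by linarith
  have hq0 : 0 < q := by
    apply Real.sqrt_pos.mpr
    rw [sub_pos, div_lt_one h4]; linarith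
  have hq2 : q ^ 2 = 1 - 1 / (4 * r) := by
    rw [hq, Real.sq_sqrt]
    rw [sub_nonneg, div_le_one h4]; linarith
  have hns_ge : 2 * q ≤ ns := by
    have e1 := aux_e1 r hr0
    have h1 : (2 * q) ^ 2 ≤ ns ^ 2 := by
      rw [mul_pow, hq2, hs2]; linarith [e1, h]
    exact le_of_pow_le_pow_left₀ two_ne_zero (euclNorm_nonneg s) h1
  have hMnn : 0 ≤ specNorm M := norm_nonneg _
  rw [le_div_iff₀ hq0]
  rcases eq_or_lt_of_le (euclNorm_nonneg δ) with h0 | h0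
  · rw [hnδ, ← h0]
    simpa using hMnn
  · -- nδ > 0
    have : nδ ^ 2 * q ≤ specNorm M * nδ := by
      calc nδ ^ 2 * q = (2 - 2*c) * q := by rw [hδ2]
        _ = (1 - c) * (2 * q) := by ring
        _ ≤ (1 - c) * ns := by
            apply mul_le_mul_of_nonneg_left hns_ge (by linarith)
        _ ≤ specNorm M * nδ := hkey2
    have hnδ0 : 0 < nδ := h0
    nlinarith [this, mul_pos hnδ0 hq0]
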